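/- Let B ≥ 8 and let a : Fin B → ℝ be strictly increasing with all values positive. Consider the family of subset sums σ(S) = ∑_{i∈S} a i over all S ⊆ Fin B. Define the candidate collection C of 13 subsets: ∅, {0}, {1}, {2}, {3}, {4}, {5}, {6}, {0,1}, {0,2}, {1,2}, {0,3}, {0,1,2}. Then for every subset T ∉ C, there exist at least 8 subsets S ∈ C with σ(S) < σ(T). In particular, the 8 smallest subset sums are all attained by subsets in C. -/

import Mathlib

/-- Subset sum of `a` over a finset. -/
def sigmaSum {B : ℕ} (a : Fin B → ℝ) (S : Finset (Fin B)) : ℝ := ∑ i ∈ S, a i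

/-- The 13 candidate error patterns for a rate-1 node with list size 8:
∅, {0}, {1}, {2}, {3}, {4}, {5}, {6}, {0,1}, {0,2}, {1,2}, {0,3}, {0,1,2}. -/
def candR1 {B : ℕ} (hB : 8 ≤ B) : Finset (Finset (Fin B)) :=
  {∅, {⟨0, by omega⟩}, {⟨1, by omega⟩}, {⟨2, by omega⟩}, {⟨3, by omega⟩},
    {⟨4, by omega⟩}, {⟨5, by omega⟩}, {⟨6, by omega⟩},
    {⟨0, by omega⟩, ⟨1, by omega⟩}, {⟨0, by omega⟩, ⟨2, by omega⟩},
    {⟨1, by omega⟩, ⟨2, by omega⟩}, {⟨0, by omega⟩, ⟨3, by omega⟩},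
    {⟨0, by omega⟩, ⟨1, by omega⟩, ⟨2, by omega⟩}}

/-- Binary code of a finset, used to distinguish finsets. -/
def codeS {B : ℕ} (S : Finset (Fin B)) : ℕ := ∑ i ∈ S, 2^(i:ℕ)

lemma eight_le_card {B : ℕ} {filt : Finset (Finset (Fin B))}
    {s0 s1 s2 s3 s4 s5 s6 s7 : Finset (Fin B)} {c0 c1 c2 c3 c4 c5 c6 c7 : ℕ}
    (m0 : s0 ∈ filt) (m1 : s1 ∈ filt) (m2 : s2 ∈ filt) (m3 : s3 ∈ filt)
    (m4 : s4 ∈ filt) (m5 : s5 ∈ filt) (m6 : s6 ∈ filt) (m7 : s7 ∈ filt)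
    (e0 : codeS s0 = c0) (e1 : codeS s1 = c1) (e2 : codeS s2 = c2) (e3 : codeS s3 = c3)
    (e4 : codeS s4 = c4) (e5 : codeS s5 = c5) (e6 : codeS s6 = c6) (e7 : codeS s7 = c7)
    (hnd : ([c0,c1,c2,c3,c4,c5,c6,c7] : List ℕ).Nodup) : 8 ≤ filt.card := by
  have hmap : ([s0,s1,s2,s3,s4,s5,s6,s7].map codeS).Nodup := by
    simpa [e0,e1,e2,e3,e4,e5,e6,e7] using hnd
  have hnodup : ([s0,s1,s2,s3,s4,s5,s6,s7] : List (Finset (Fin B))).Nodup :=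
    hmap.of_map
  have hcard : ([s0,s1,s2,s3,s4,s5,s6,s7] : List (Finset (Fin B))).toFinset.card = 8 := by
    rw [List.card_toFinset, hnodup.dedup]; rfl
  have hsub : ([s0,s1,s2,s3,s4,s5,s6,s7] : List (Finset (Fin B))).toFinset ⊆ filt := by
    intro x hx
    simp only [List.mem_toFinset, List.mem_cons, List.not_mem_nil, or_false] at hx
    rcases hx with h|h|h|h|h|h|h|h <;> subst h <;> assumption
  calc 8 = _ := hcard.symm
    _ ≤ filt.card := Finset.card_le_card hsub

set_option maxHeartbeats 1000000 in
/-- Proposition 1: for every subset `T` outside the 13-element candidate collection,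
at least 8 candidates have strictly smaller subset sum; hence the 8 smallest subset
sums are all attained within the candidate collection. -/
theorem rate1_candidates_suffice {B : ℕ} (hB : 8 ≤ B) (a : Fin B → ℝ)
    (hpos : ∀ i, 0 < a i) (hmono : StrictMono a) :
    ∀ T : Finset (Fin B), T ∉ candR1 hB →
      8 ≤ ((candR1 hB).filter (fun S => sigmaSum a S < sigmaSum a T)).card := by
  intro T hT
  have hlt : ∀ (v w : Fin B), v.val < w.val → a v < a w := fun v w h => hmono (Fin.lt_def.mpr h)
  have hle : ∀ (v w : Fin B), v.val ≤ w.val → a v ≤ a w :=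
    fun v w h => hmono.monotone (Fin.le_def.mpr h)
  have hσ0 : sigmaSum a ∅ = 0 := Finset.sum_empty
  have hσ1 : ∀ i, sigmaSum a {i} = a i := fun i => Finset.sum_singleton _ _
  have hσ2 : ∀ i j : Fin B, i ≠ j → sigmaSum a {i,j} = a i + a j := fun i j h => Finset.sum_pair h
  have hσ3 : ∀ i j k : Fin B, i ≠ j → i ≠ k → j ≠ k →
      sigmaSum a {i,j,k} = a i + a j + a k := by
    intro i j k h1 h2 h3
    rw [sigmaSum, Finset.sum_insert (by simp [h1, h2]), Finset.sum_pair h3]; ring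
  have hσ4 : ∀ i j k l : Fin B, i ≠ j → i ≠ k → i ≠ l → j ≠ k → j ≠ l → k ≠ l →
      sigmaSum a {i,j,k,l} = a i + a j + a k + a l := by
    intro i j k l h1 h2 h3 h4 h5 h6
    rw [sigmaSum, Finset.sum_insert (by simp [h1, h2, h3]),
      Finset.sum_insert (by simp [h4, h5]), Finset.sum_pair h6]; ring
  set filt := (candR1 hB).filter (fun S => sigmaSum a S < sigmaSum a T) with hfilt
  have memf : ∀ S : Finset (Fin B), S ∈ candR1 hB → sigmaSum a S < sigmaSum a T → S ∈ filt :=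
    fun S h1 h2 => Finset.mem_filter.mpr ⟨h1, h2⟩
  obtain h0 | h1 | h2 | h3 : T.card = 0 ∨ T.card = 1 ∨ T.card = 2 ∨ 3 ≤ T.card := by omega
  · -- card 0 : contradiction
    exact absurd (by rw [Finset.card_eq_zero.mp h0]; simp [candR1]) hT
  · -- card 1
    obtain ⟨k, hk⟩ := Finset.card_eq_one.mp h1
    have hk7 : 7 ≤ k.val := by
      by_contra h
      push_neg at h
      apply hT
      rw [hk]
      obtain h|h|h|h|h|h|h : k.val = 0 ∨ k.val = 1 ∨ k.val = 2 ∨ k.val = 3 ∨ k.val = 4 ∨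
        k.val = 5 ∨ k.val = 6 := by omega
      all_goals simp [candR1, Fin.ext_iff, h]
    have hσT : sigmaSum a T = a k := by rw [hk, hσ1]
    have hpk : ∀ m : ℕ, (hm : m < 7) → a ⟨m, by omega⟩ < a k := fun m hm => hlt _ _ (show m < k.val by omega)
    have M0 : ∅ ∈ filt := memf ∅ (by simp [candR1]) (by rw [hσ0, hσT]; exact hpos k)
    have M1 : {(⟨0, by omega⟩ : Fin B)} ∈ filt :=
      memf _ (by simp [candR1]) (by rw [hσ1, hσT]; exact hpk 0 (by omega))
    have M2 : {(⟨1, by omega⟩ : Fin B)} ∈ filt :=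
      memf _ (by simp [candR1]) (by rw [hσ1, hσT]; exact hpk 1 (by omega))
    have M3 : {(⟨2, by omega⟩ : Fin B)} ∈ filt :=
      memf _ (by simp [candR1]) (by rw [hσ1, hσT]; exact hpk 2 (by omega))
    have M4 : {(⟨3, by omega⟩ : Fin B)} ∈ filt :=
      memf _ (by simp [candR1]) (by rw [hσ1, hσT]; exact hpk 3 (by omega))
    have M5 : {(⟨4, by omega⟩ : Fin B)} ∈ filt :=
      memf _ (by simp [candR1]) (by rw [hσ1, hσT]; exact hpk 4 (by omega))
    have M6 : {(⟨5, by omega⟩ : Fin B)} ∈ filt :=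
      memf _ (by simp [candR1]) (by rw [hσ1, hσT]; exact hpk 5 (by omega))
    have M7 : {(⟨6, by omega⟩ : Fin B)} ∈ filt :=
      memf _ (by simp [candR1]) (by rw [hσ1, hσT]; exact hpk 6 (by omega))
    exact eight_le_card M0 M1 M2 M3 M4 M5 M6 M7
      (c0 := 0) (c1 := 1) (c2 := 2) (c3 := 4) (c4 := 8) (c5 := 16) (c6 := 32) (c7 := 64)
      (by simp [codeS]) (by simp [codeS]) (by simp [codeS]) (by simp [codeS])
      (by simp [codeS]) (by simp [codeS]) (by simp [codeS]) (by simp [codeS])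
      (by decide)
  · -- card 2
    obtain ⟨x, y, hxy, hTxy⟩ := Finset.card_eq_two.mp h2
    obtain ⟨i, j, hij, hTij⟩ : ∃ i j : Fin B, i.val < j.val ∧ T = {i, j} := by
      rcases lt_or_gt_of_ne hxy with h | h
      · exact ⟨x, y, Fin.lt_def.mp h, hTxy⟩
      · exact ⟨y, x, Fin.lt_def.mp h, by rw [hTxy, Finset.pair_comm]⟩
    have hijne : i ≠ j := Fin.ne_of_val_ne (by omega)
    have hσT : sigmaSum a T = a i + a j := by rw [hTij, hσ2 i j hijne]
    have hkey : 3 ≤ j.val ∧ ¬(i.val = 0 ∧ j.val = 3) := by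
      by_contra hc
      apply hT
      rw [hTij]
      obtain h|h|h|h : (i.val = 0 ∧ j.val = 1) ∨ (i.val = 0 ∧ j.val = 2) ∨
          (i.val = 1 ∧ j.val = 2) ∨ (i.val = 0 ∧ j.val = 3) := by
        push_neg at hc; omega
      · rw [Fin.eq_of_val_eq (show i.val = (⟨0, by omega⟩ : Fin B).val from h.1),
          Fin.eq_of_val_eq (show j.val = (⟨1, by omega⟩ : Fin B).val from h.2)]
        simp [candR1]
      · rw [Fin.eq_of_val_eq (show i.val = (⟨0, by omega⟩ : Fin B).val from h.1),
          Fin.eq_of_val_eq (show j.val = (⟨2, by omega⟩ : Fin B).val from h.2)]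
        simp [candR1]
      · rw [Fin.eq_of_val_eq (show i.val = (⟨1, by omega⟩ : Fin B).val from h.1),
          Fin.eq_of_val_eq (show j.val = (⟨2, by omega⟩ : Fin B).val from h.2)]
        simp [candR1]
      · rw [Fin.eq_of_val_eq (show i.val = (⟨0, by omega⟩ : Fin B).val from h.1),
          Fin.eq_of_val_eq (show j.val = (⟨3, by omega⟩ : Fin B).val from h.2)]
        simp [candR1]
    obtain ⟨hj3, hn03⟩ := hkey
    -- basic inequalities
    have hA01 : a ⟨0, by omega⟩ < a ⟨1, by omega⟩ := hlt _ _ (show (0:ℕ) < 1 by omega)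
    have hA12 : a ⟨1, by omega⟩ < a ⟨2, by omega⟩ := hlt _ _ (show (1:ℕ) < 2 by omega)
    have hA23 : a ⟨2, by omega⟩ < a ⟨3, by omega⟩ := hlt _ _ (show (2:ℕ) < 3 by omega)
    have h0i : a ⟨0, by omega⟩ ≤ a i := hle _ _ (show (0:ℕ) ≤ i.val by omega)
    have h3j : a ⟨3, by omega⟩ ≤ a j := hle _ _ (show (3:ℕ) ≤ j.val by omega)
    have hposi := hpos i
    have hposj := hpos j
    have h03 : a ⟨0, by omega⟩ + a ⟨3, by omega⟩ < a i + a j := by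
      rcases Nat.eq_zero_or_pos i.val with h | h
      · have hj4 : 4 ≤ j.val := by
          rcases Nat.lt_or_ge j.val 4 with h' | h'
          · exact absurd ⟨h, by omega⟩ hn03
          · exact h'
        have : a ⟨3, by omega⟩ < a j := hlt _ _ (show (3:ℕ) < j.val by omega)
        linarith
      · have : a ⟨0, by omega⟩ < a i := hlt _ _ (show (0:ℕ) < i.val by omega)
        linarith
    have hne01 : (⟨0, by omega⟩ : Fin B) ≠ ⟨1, by omega⟩ := Fin.ne_of_val_ne (show (0:ℕ) ≠ 1 by omega)
    have hne02 : (⟨0, by omega⟩ : Fin B) ≠ ⟨2, by omega⟩ := Fin.ne_of_val_ne (show (0:ℕ) ≠ 2 by omega)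
    have hne03 : (⟨0, by omega⟩ : Fin B) ≠ ⟨3, by omega⟩ := Fin.ne_of_val_ne (show (0:ℕ) ≠ 3 by omega)
    have M0 : ∅ ∈ filt := memf ∅ (by simp [candR1]) (by rw [hσ0, hσT]; linarith)
    have M1 : {(⟨0, by omega⟩ : Fin B)} ∈ filt :=
      memf _ (by simp [candR1]) (by rw [hσ1, hσT]; linarith)
    have M2 : {(⟨1, by omega⟩ : Fin B)} ∈ filt :=
      memf _ (by simp [candR1]) (by rw [hσ1, hσT]; linarith)
    have M3 : {(⟨2, by omega⟩ : Fin B)} ∈ filt :=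
      memf _ (by simp [candR1]) (by rw [hσ1, hσT]; linarith)
    have M4 : {(⟨3, by omega⟩ : Fin B)} ∈ filt :=
      memf _ (by simp [candR1]) (by rw [hσ1, hσT]; linarith)
    have M5 : ({⟨0, by omega⟩, ⟨1, by omega⟩} : Finset (Fin B)) ∈ filt :=
      memf _ (by simp [candR1]) (by rw [hσ2 _ _ hne01, hσT]; linarith)
    have M6 : ({⟨0, by omega⟩, ⟨2, by omega⟩} : Finset (Fin B)) ∈ filt :=
      memf _ (by simp [candR1]) (by rw [hσ2 _ _ hne02, hσT]; linarith)
    have M7 : ({⟨0, by omega⟩, ⟨3, by omega⟩} : Finset (Fin B)) ∈ filt :=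
      memf _ (by simp [candR1]) (by rw [hσ2 _ _ hne03, hσT]; linarith)
    exact eight_le_card M0 M1 M2 M3 M4 M5 M6 M7
      (c0 := 0) (c1 := 1) (c2 := 2) (c3 := 4) (c4 := 8) (c5 := 3) (c6 := 5) (c7 := 9)
      (by simp [codeS]) (by simp [codeS]) (by simp [codeS]) (by simp [codeS])
      (by simp [codeS]) (by simp [codeS, Finset.sum_pair hne01])
      (by simp [codeS, Finset.sum_pair hne02]) (by simp [codeS, Finset.sum_pair hne03])
      (by decide)
  · -- card ≥ 3
    have hA01 : a ⟨0, by omega⟩ < a ⟨1, by omega⟩ := hlt _ _ (show (0:ℕ) < 1 by omega)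
    have hA12 : a ⟨1, by omega⟩ < a ⟨2, by omega⟩ := hlt _ _ (show (1:ℕ) < 2 by omega)
    have hA23 : a ⟨2, by omega⟩ < a ⟨3, by omega⟩ := hlt _ _ (show (2:ℕ) < 3 by omega)
    have hA0p := hpos (⟨0, by omega⟩ : Fin B)
    have hA1p := hpos (⟨1, by omega⟩ : Fin B)
    have hA2p := hpos (⟨2, by omega⟩ : Fin B)
    have hkey : a ⟨0, by omega⟩ + a ⟨1, by omega⟩ + a ⟨2, by omega⟩ < sigmaSum a T := by
      obtain hc3 | hc4 : T.card = 3 ∨ 4 ≤ T.card := by omega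
      · -- exactly 3 elements
        set f := T.orderEmbOfFin hc3 with hf
        have hm0 := T.orderEmbOfFin_mem hc3 0
        have hm1 := T.orderEmbOfFin_mem hc3 1
        have hm2 := T.orderEmbOfFin_mem hc3 2
        have h01 : (f 0).val < (f 1).val := Fin.lt_def.mp (f.strictMono (by decide))
        have h12 : (f 1).val < (f 2).val := Fin.lt_def.mp (f.strictMono (by decide))
        have hTeq : T = {f 0, f 1, f 2} := by
          refine (Finset.eq_of_subset_of_card_le ?_ ?_).symm
          · intro x hx
            simp only [Finset.mem_insert, Finset.mem_singleton] at hx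
            rcases hx with h|h|h <;> subst h <;> assumption
          · rw [hc3]
            refine le_of_eq ?_
            rw [Finset.card_insert_of_notMem (by simp [Fin.ext_iff] <;> omega),
              Finset.card_insert_of_notMem (by simp [Fin.ext_iff] <;> omega),
              Finset.card_singleton]
        have ht23 : 3 ≤ (f 2).val := by
          by_contra h
          push_neg at h
          apply hT
          rw [hTeq]
          have e0 : f 0 = ⟨0, by omega⟩ := Fin.eq_of_val_eq (show (f 0).val = 0 by omega)
          have e1 : f 1 = ⟨1, by omega⟩ := Fin.eq_of_val_eq (show (f 1).val = 1 by omega)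
          have e2 : f 2 = ⟨2, by omega⟩ := Fin.eq_of_val_eq (show (f 2).val = 2 by omega)
          rw [e0, e1, e2]
          simp [candR1]
        have hσT : sigmaSum a T = a (f 0) + a (f 1) + a (f 2) := by
          rw [hTeq, hσ3 _ _ _ (Fin.ne_of_val_ne (by omega)) (Fin.ne_of_val_ne (by omega))
            (Fin.ne_of_val_ne (by omega))]
        have hb0 : a ⟨0, by omega⟩ ≤ a (f 0) := hle _ _ (show (0:ℕ) ≤ (f 0).val by omega)
        have hb1 : a ⟨1, by omega⟩ ≤ a (f 1) := hle _ _ (show (1:ℕ) ≤ (f 1).val by omega)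
        have hb2 : a ⟨2, by omega⟩ < a (f 2) := hlt _ _ (show (2:ℕ) < (f 2).val by omega)
        rw [hσT]; linarith
      · -- at least 4 elements : pick a 4-element subset
        obtain ⟨T', hT'sub, hc4'⟩ := Finset.exists_subset_card_eq hc4
        set f := T'.orderEmbOfFin hc4' with hf
        have h01 : (f 0).val < (f 1).val := Fin.lt_def.mp (f.strictMono (by decide))
        have h12 : (f 1).val < (f 2).val := Fin.lt_def.mp (f.strictMono (by decide))
        have h23 : (f 2).val < (f 3).val := Fin.lt_def.mp (f.strictMono (by decide))
        have hTeq : T' = {f 0, f 1, f 2, f 3} := by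
          refine (Finset.eq_of_subset_of_card_le ?_ ?_).symm
          · intro x hx
            simp only [Finset.mem_insert, Finset.mem_singleton] at hx
            rcases hx with h|h|h|h <;> subst h <;> exact T'.orderEmbOfFin_mem hc4' _
          · rw [hc4']
            refine le_of_eq ?_
            rw [Finset.card_insert_of_notMem (by simp [Fin.ext_iff] <;> omega),
              Finset.card_insert_of_notMem (by simp [Fin.ext_iff] <;> omega),
              Finset.card_insert_of_notMem (by simp [Fin.ext_iff] <;> omega),
              Finset.card_singleton]
        have hσT' : sigmaSum a T' = a (f 0) + a (f 1) + a (f 2) + a (f 3) := by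
          rw [hTeq, hσ4 _ _ _ _ (Fin.ne_of_val_ne (by omega)) (Fin.ne_of_val_ne (by omega))
            (Fin.ne_of_val_ne (by omega)) (Fin.ne_of_val_ne (by omega))
            (Fin.ne_of_val_ne (by omega)) (Fin.ne_of_val_ne (by omega))]
        have hsle : sigmaSum a T' ≤ sigmaSum a T :=
          Finset.sum_le_sum_of_subset_of_nonneg hT'sub (fun i _ _ => (hpos i).le)
        have hb0 : a ⟨0, by omega⟩ ≤ a (f 0) := hle _ _ (show (0:ℕ) ≤ (f 0).val by omega)
        have hb1 : a ⟨1, by omega⟩ ≤ a (f 1) := hle _ _ (show (1:ℕ) ≤ (f 1).val by omega)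
        have hb2 : a ⟨2, by omega⟩ ≤ a (f 2) := hle _ _ (show (2:ℕ) ≤ (f 2).val by omega)
        have hb3 : (0:ℝ) < a (f 3) := hpos _
        rw [hσT'] at hsle; linarith
    have hne01 : (⟨0, by omega⟩ : Fin B) ≠ ⟨1, by omega⟩ := Fin.ne_of_val_ne (show (0:ℕ) ≠ 1 by omega)
    have hne02 : (⟨0, by omega⟩ : Fin B) ≠ ⟨2, by omega⟩ := Fin.ne_of_val_ne (show (0:ℕ) ≠ 2 by omega)
    have hne12 : (⟨1, by omega⟩ : Fin B) ≠ ⟨2, by omega⟩ := Fin.ne_of_val_ne (show (1:ℕ) ≠ 2 by omega)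
    have M0 : ∅ ∈ filt := memf ∅ (by simp [candR1]) (by rw [hσ0]; linarith)
    have M1 : {(⟨0, by omega⟩ : Fin B)} ∈ filt :=
      memf _ (by simp [candR1]) (by rw [hσ1]; linarith)
    have M2 : {(⟨1, by omega⟩ : Fin B)} ∈ filt :=
      memf _ (by simp [candR1]) (by rw [hσ1]; linarith)
    have M3 : {(⟨2, by omega⟩ : Fin B)} ∈ filt :=
      memf _ (by simp [candR1]) (by rw [hσ1]; linarith)
    have M4 : ({⟨0, by omega⟩, ⟨1, by omega⟩} : Finset (Fin B)) ∈ filt :=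
      memf _ (by simp [candR1]) (by rw [hσ2 _ _ hne01]; linarith)
    have M5 : ({⟨0, by omega⟩, ⟨2, by omega⟩} : Finset (Fin B)) ∈ filt :=
      memf _ (by simp [candR1]) (by rw [hσ2 _ _ hne02]; linarith)
    have M6 : ({⟨1, by omega⟩, ⟨2, by omega⟩} : Finset (Fin B)) ∈ filt :=
      memf _ (by simp [candR1]) (by rw [hσ2 _ _ hne12]; linarith)
    have M7 : ({⟨0, by omega⟩, ⟨1, by omega⟩, ⟨2, by omega⟩} : Finset (Fin B)) ∈ filt :=
      memf _ (by simp [candR1]) (by rw [hσ3 _ _ _ hne01 hne02 hne12]; linarith)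
    exact eight_le_card M0 M1 M2 M3 M4 M5 M6 M7
      (c0 := 0) (c1 := 1) (c2 := 2) (c3 := 4) (c4 := 3) (c5 := 5) (c6 := 6) (c7 := 7)
      (by simp [codeS]) (by simp [codeS]) (by simp [codeS]) (by simp [codeS])
      (by simp [codeS, Finset.sum_pair hne01]) (by simp [codeS, Finset.sum_pair hne02])
      (by simp [codeS, Finset.sum_pair hne12])
      (by rw [codeS, Finset.sum_insert (by simp [Fin.ext_iff]), Finset.sum_pair hne12]; rfl)
      (by decide)
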